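/- If A is a complex matrix with singular values σ₁ ≥ σ₂ ≥ … ≥ σ_n, then (‖A‖* − σ₁)·σ₂ ≥ |A|₂² − σ₁², and consequently ‖A‖* ≥ σ₁ + √(|A|₂² − σ₁²). -/

import Mathlib

open Matrix BigOperators

/-- The (unordered) singular values of a complex matrix `A`: square roots of the
eigenvalues of `Aᴴ * A`. -/
noncomputable def singVals {m n : ℕ} (A : Matrix (Fin m) (Fin n) ℂ) : Fin n → ℝ :=
  fun i => Real.sqrt ((Matrix.isHermitian_conjTranspose_mul_self A).eigenvalues i)

/-- The trace norm: sum of the singular values. -/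
noncomputable def traceNorm {m n : ℕ} (A : Matrix (Fin m) (Fin n) ℂ) : ℝ :=
  ∑ i, singVals A i

/-- The Frobenius norm. -/
noncomputable def frobNorm {m n : ℕ} (A : Matrix (Fin m) (Fin n) ℂ) : ℝ :=
  Real.sqrt (∑ i, ∑ j, ‖A i j‖ ^ 2)

/-- `sigma A k` is the `k`-th largest singular value of `A` (1-indexed), `0` if out of range. -/
noncomputable def sigma {m n : ℕ} (A : Matrix (Fin m) (Fin n) ℂ) (k : ℕ) : ℝ :=
  if h : 1 ≤ k ∧ k ≤ n then
    singVals A (Tuple.sort (singVals A) ⟨n - k, by omega⟩)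
  else 0

/-- Number of entries of `A` equal to `1`. -/
noncomputable def onesCount {a b : ℕ} (A : Matrix (Fin a) (Fin b) ℂ) : ℕ := by
  classical
  exact Finset.card (Finset.univ.filter fun p : Fin a × Fin b => A p.1 p.2 = 1)

/-- Minimum trace norm of an `n × n` (0,1)-matrix with exactly `m` ones. -/
noncomputable def psi (n m : ℕ) : ℝ :=
  sInf {x | ∃ A : Matrix (Fin n) (Fin n) ℂ, (∀ i j, A i j = 0 ∨ A i j = 1) ∧
    onesCount A = m ∧ traceNorm A = x}

lemma trace_eq_sum_eig {n : ℕ} {A : Matrix (Fin n) (Fin n) ℂ} (hA : A.IsHermitian) :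
    A.trace = ∑ i, (hA.eigenvalues i : ℂ) := by
  exact hA.trace_eq_sum_eigenvalues

lemma frobSq_eq {m n : ℕ} (A : Matrix (Fin m) (Fin n) ℂ) :
    (∑ i, ∑ j, ‖A i j‖ ^ 2) =
      ∑ i, (Matrix.isHermitian_conjTranspose_mul_self A).eigenvalues i := by
  have h := congrArg Complex.re (trace_eq_sum_eig (Matrix.isHermitian_conjTranspose_mul_self A))
  rw [Matrix.trace] at h
  simp only [Matrix.diag_apply, Matrix.mul_apply, Matrix.conjTranspose_apply,
    Complex.re_sum, Complex.ofReal_re] at h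
  rw [← h, Finset.sum_comm]
  congr 1; ext i; congr 1; ext j
  rw [Complex.sq_norm]
  simp [Complex.normSq_apply, Complex.mul_re]

theorem stmt2 {m n : ℕ} (A : Matrix (Fin m) (Fin n) ℂ) :
    (traceNorm A - sigma A 1) * sigma A 2 ≥ frobNorm A ^ 2 - sigma A 1 ^ 2 ∧
    traceNorm A ≥ sigma A 1 + Real.sqrt (frobNorm A ^ 2 - sigma A 1 ^ 2) := by
  rcases Nat.eq_zero_or_pos n with hn | hn
  · subst hn
    have h1 : sigma A 1 = 0 := by simp [sigma]
    have h2 : sigma A 2 = 0 := by simp [sigma]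
    have hT : traceNorm A = 0 := by simp [traceNorm]
    have hF : frobNorm A = 0 := by simp [frobNorm]
    simp [h1, h2, hT, hF]
  · set f := singVals A with hf
    set g : Fin n → ℝ := f ∘ Tuple.sort f with hg
    have hgmono : Monotone g := Tuple.monotone_sort f
    have hgnn : ∀ i, 0 ≤ g i := fun i => Real.sqrt_nonneg _
    have hT : traceNorm A = ∑ i, g i := by
      rw [traceNorm, ← Equiv.sum_comp (Tuple.sort f) f]; rfl
    have he : ∀ i, (Matrix.isHermitian_conjTranspose_mul_self A).eigenvalues i = f i ^ 2 :=
      fun i => (Real.sq_sqrt (Matrix.eigenvalues_conjTranspose_mul_self_nonneg A i)).symm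
    have hF : frobNorm A ^ 2 = ∑ i, g i ^ 2 := by
      rw [frobNorm, Real.sq_sqrt (by positivity), frobSq_eq]
      simp only [he]
      exact (Equiv.sum_comp (Tuple.sort f) (fun i => f i ^ 2)).symm
    set top : Fin n := ⟨n - 1, by omega⟩ with htop
    have hs1 : sigma A 1 = g top := by
      rw [sigma, dif_pos ⟨le_refl 1, hn⟩]; rfl
    -- sums over the erased set
    have hTsplit : ∑ i, g i = g top + ∑ i ∈ Finset.univ.erase top, g i :=
      (Finset.add_sum_erase _ g (Finset.mem_univ top)).symm
    have hFsplit : ∑ i, g i ^ 2 = g top ^ 2 + ∑ i ∈ Finset.univ.erase top, g i ^ 2 :=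
      (Finset.add_sum_erase _ (fun i => g i ^ 2) (Finset.mem_univ top)).symm
    have key : ∑ i ∈ Finset.univ.erase top, g i ^ 2 ≤
        sigma A 2 * ∑ i ∈ Finset.univ.erase top, g i := by
      rw [Finset.mul_sum]
      apply Finset.sum_le_sum
      intro i hi
      have hine : i ≠ top := Finset.ne_of_mem_erase hi
      have h2n : 2 ≤ n := by
        by_contra h
        have : n = 1 := by omega
        subst this
        exact hine (Fin.ext (by omega))
      have hilt : (i : ℕ) ≤ n - 2 := by
        have := i.isLt
        have : (i : ℕ) ≠ n - 1 := fun h => hine (Fin.ext (by simpa using h))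
        omega
      have hs2 : sigma A 2 = g ⟨n - 2, by omega⟩ := by
        rw [sigma, dif_pos ⟨by omega, h2n⟩]; rfl
      have hle : g i ≤ sigma A 2 := by
        rw [hs2]; exact hgmono (by simpa [Fin.le_def] using hilt)
      calc g i ^ 2 = g i * g i := sq (g i) ▸ (sq (g i)).symm ▸ (pow_two (g i))
        _ ≤ sigma A 2 * g i := mul_le_mul_of_nonneg_right hle (hgnn i)
    have hTm : traceNorm A - sigma A 1 = ∑ i ∈ Finset.univ.erase top, g i := by
      rw [hT, hs1, hTsplit]; ring
    have hFm : frobNorm A ^ 2 - sigma A 1 ^ 2 = ∑ i ∈ Finset.univ.erase top, g i ^ 2 := by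
      rw [hF, hs1, hFsplit]; ring
    have first : (traceNorm A - sigma A 1) * sigma A 2 ≥ frobNorm A ^ 2 - sigma A 1 ^ 2 := by
      rw [hTm, hFm, mul_comm]; exact key
    refine ⟨first, ?_⟩
    have hTmnn : 0 ≤ traceNorm A - sigma A 1 := by
      rw [hTm]; exact Finset.sum_nonneg fun i _ => hgnn i
    have hs2le : sigma A 2 ≤ traceNorm A - sigma A 1 := by
      rcases Nat.lt_or_ge n 2 with h | h
      · rw [sigma, dif_neg (by omega)]; exact hTmnn
      · have hs2 : sigma A 2 = g ⟨n - 2, by omega⟩ := by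
          rw [sigma, dif_pos ⟨by omega, h⟩]; rfl
        rw [hTm, hs2]
        apply Finset.single_le_sum (fun i _ => hgnn i)
        refine Finset.mem_erase.mpr ⟨?_, Finset.mem_univ _⟩
        intro hc
        have := congrArg Fin.val hc
        simp [htop] at this
        omega
    have hsq : frobNorm A ^ 2 - sigma A 1 ^ 2 ≤ (traceNorm A - sigma A 1) ^ 2 := by
      calc frobNorm A ^ 2 - sigma A 1 ^ 2 ≤ (traceNorm A - sigma A 1) * sigma A 2 := first
        _ ≤ (traceNorm A - sigma A 1) * (traceNorm A - sigma A 1) :=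
            mul_le_mul_of_nonneg_left hs2le hTmnn
        _ = (traceNorm A - sigma A 1) ^ 2 := (sq _).symm
    have : Real.sqrt (frobNorm A ^ 2 - sigma A 1 ^ 2) ≤ traceNorm A - sigma A 1 := by
      calc Real.sqrt (frobNorm A ^ 2 - sigma A 1 ^ 2)
          ≤ Real.sqrt ((traceNorm A - sigma A 1) ^ 2) := Real.sqrt_le_sqrt hsq
        _ = traceNorm A - sigma A 1 := Real.sqrt_sq hTmnn
    linarith
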